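/- For any positive integer n, the least common multiple of the binomial coefficients C(n,0), C(n,1), ..., C(n,n) equals lcm(1, 2, ..., n+1) divided by n+1; equivalently, (n+1) · lcm(C(n,0), C(n,1), ..., C(n,n)) = lcm(1, 2, ..., n+1). -/

import Mathlib

open Finset

/-- Kummer-type bound: `v_p(C(N,m)) + v_p(m) ≤ log_p N`. -/
theorem choose_fact_bound {p N m : ℕ} (hp : p.Prime) (hm : 0 < m) (hmN : m ≤ N) :
    (N.choose m).factorization p + m.factorization p ≤ Nat.log p N := by
  have hN : 0 < N := hm.trans_le hmN
  set t := m.factorization p with ht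
  have htlog : t ≤ Nat.log p N := by
    have h1 : p ^ t ∣ m := Nat.ordProj_dvd m p
    have h2 : p ^ t ≤ N := le_trans (Nat.le_of_dvd hm h1) hmN
    exact (Nat.le_log_iff_pow_le hp.one_lt hN.ne').mpr h2
  have hcard : (N.choose m).factorization p ≤ Nat.log p N - t := by
    have hfin : FiniteMultiplicity p (N.choose m) :=
      Nat.finiteMultiplicity_iff.2 ⟨hp.ne_one, Nat.choose_pos hmN⟩
    have hmul := hp.emultiplicity_choose hmN (Nat.lt_succ_self (Nat.log p N))
    have hsub : {i ∈ Finset.Ico 1 (Nat.log p N + 1) | p ^ i ≤ m % p ^ i + (N - m) % p ^ i}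
        ⊆ Finset.Ico (t + 1) (Nat.log p N + 1) := by
      intro i hi
      simp only [Finset.mem_filter, Finset.mem_Ico] at hi ⊢
      refine ⟨?_, hi.1.2⟩
      by_contra hit
      push_neg at hit
      have hdvd : p ^ i ∣ m :=
        dvd_trans (pow_dvd_pow p (by omega)) (Nat.ordProj_dvd m p)
      have hm0 : m % p ^ i = 0 := Nat.mod_eq_zero_of_dvd hdvd
      have hle := hi.2
      rw [hm0, zero_add] at hle
      exact absurd hle (not_le.2 (Nat.mod_lt _ (pow_pos hp.pos i)))
    have hcard' := Finset.card_le_card hsub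
    rw [Nat.card_Ico] at hcard'
    rw [Nat.factorization_def _ hp, @padicValNat_def _ ⟨hp⟩ _ (Nat.choose_pos hmN).ne']
    rw [← Nat.cast_le (α := ℕ∞), ← hfin.emultiplicity_eq_multiplicity, hmul]
    exact_mod_cast hcard'.trans (by omega)
  omega

/-- Key divisibility: `m * C(N,m) ∣ lcm(1,...,N)` for `1 ≤ m ≤ N`. -/
theorem key_dvd {N m : ℕ} (hm : 0 < m) (hmN : m ≤ N) :
    m * N.choose m ∣ (Finset.Icc 1 N).lcm id := by
  have hN : 0 < N := hm.trans_le hmN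
  have hL0 : (Finset.Icc 1 N).lcm id ≠ 0 := by
    rw [Ne, Finset.lcm_eq_zero_iff]
    rintro ⟨x, hx, hx0⟩
    simp only [Finset.mem_Icc, Finset.coe_Icc, Set.mem_Icc, id_eq] at hx hx0
    omega
  have hc0 : N.choose m ≠ 0 := (Nat.choose_pos hmN).ne'
  have hd0 : m * N.choose m ≠ 0 := Nat.mul_ne_zero hm.ne' hc0
  rw [← Nat.factorization_le_iff_dvd hd0 hL0]
  rw [Finsupp.le_def]
  intro p
  by_cases hp : p.Prime
  · by_cases hpN : p ≤ N
    · have hlog : Nat.log p N ≤ ((Finset.Icc 1 N).lcm id).factorization p := by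
        have hmem : p ^ Nat.log p N ∈ Finset.Icc 1 N :=
          Finset.mem_Icc.2 ⟨Nat.one_le_pow _ _ hp.pos, Nat.pow_log_le_self p hN.ne'⟩
        have hdvd : p ^ Nat.log p N ∣ (Finset.Icc 1 N).lcm id := Finset.dvd_lcm hmem
        exact (Nat.Prime.pow_dvd_iff_le_factorization hp hL0).mp hdvd
      refine le_trans ?_ hlog
      rw [Nat.factorization_mul hm.ne' hc0, Finsupp.add_apply, add_comm]
      exact choose_fact_bound hp hm hmN
    · have h1 : m.factorization p = 0 :=
        Nat.factorization_eq_zero_of_lt (by omega)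
      have h2 : (N.choose m).factorization p = 0 :=
        Nat.factorization_choose_eq_zero_of_lt (by omega)
      rw [Nat.factorization_mul hm.ne' hc0, Finsupp.add_apply, h1, h2]
      exact Nat.zero_le _
  · rw [Nat.factorization_eq_zero_of_not_prime _ hp]
    exact Nat.zero_le _

theorem mul_finset_lcm {s : Finset ℕ} (hs : s.Nonempty) (c : ℕ) (f : ℕ → ℕ) :
    c * s.lcm f = s.lcm fun i => c * f i := by
  induction hs using Finset.Nonempty.cons_induction with
  | singleton a => simp [Finset.lcm_singleton]
  | cons a s ha hs ih => rw [Finset.cons_eq_insert, Finset.lcm_insert, Finset.lcm_insert, ← ih]; exact (Nat.lcm_mul_left _ _ _).symm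

/-- Farhi's identity: `(n+1) * lcm(C(n,0), ..., C(n,n)) = lcm(1, 2, ..., n+1)`. -/
theorem farhi_binomial_lcm (n : ℕ) (hn : 0 < n) :
    (n + 1) * (Finset.range (n + 1)).lcm (n.choose) = (Finset.Icc 1 (n + 1)).lcm id := by
  rw [mul_finset_lcm (Finset.nonempty_range_iff.2 (Nat.succ_ne_zero n)) (n + 1) n.choose]
  apply Nat.dvd_antisymm
  · apply Finset.lcm_dvd
    intro k hk
    rw [Finset.mem_range] at hk
    have hid : (n + 1) * n.choose k = (k + 1) * (n + 1).choose (k + 1) := by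
      rw [Nat.add_one_mul_choose_eq]; exact mul_comm _ _
    rw [hid]
    exact key_dvd (Nat.succ_pos k) (by omega)
  · apply Finset.lcm_dvd
    intro m hm
    rw [Finset.mem_Icc] at hm
    have hdvd : (m : ℕ) ∣ (n + 1) * n.choose (m - 1) := by
      have hid : (n + 1) * n.choose (m - 1) = (m - 1 + 1) * (n + 1).choose (m - 1 + 1) := by
        rw [Nat.add_one_mul_choose_eq]; exact mul_comm _ _
      rw [hid]
      have : m - 1 + 1 = m := by omega
      rw [this]
      exact Dvd.intro _ rfl
    exact hdvd.trans (Finset.dvd_lcm (Finset.mem_range.2 (by omega)))
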